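/- Let n ≥ 1, let u ∈ [0,1]^{2n}, and let w ∈ ℝⁿ satisfy max{u_i + u_{n+i} − 1, 0} ≤ w_i ≤ min{u_i, u_{n+i}} for every i ∈ [n]. Define the symmetric 2n × 2n real matrix M by: M_{ii} = u_i − u_i² for all i ∈ [2n]; M_{i, n+i} = M_{n+i, i} = w_i − u_i u_{n+i} for all i ∈ [n]; and all other entries equal to 0. Then M is positive semidefinite. -/

import Mathlib

private lemma quad_nn (a b c v1 v2 : ℝ) (ha : |c| ≤ a) (hb : |c| ≤ b) :
    0 ≤ a * v1 ^ 2 + 2 * c * v1 * v2 + b * v2 ^ 2 := by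
  obtain ⟨ha1, ha2⟩ := abs_le.mp ha
  obtain ⟨hb1, hb2⟩ := abs_le.mp hb
  rcases le_or_gt 0 c with hc | hc
  · nlinarith [sq_nonneg (v1 + v2), sq_nonneg v1, sq_nonneg v2,
      mul_nonneg hc (sq_nonneg (v1 + v2))]
  · nlinarith [sq_nonneg (v1 - v2), sq_nonneg v1, sq_nonneg v2,
      mul_nonneg (neg_nonneg.mpr hc.le) (sq_nonneg (v1 - v2))]

/-- The McCormick-error matrix is positive semidefinite.  Indices
[2n] are encoded as `Fin n ⊕ Fin n`, with i ↦ `Sum.inl i` and n+i ↦ `Sum.inr i`. -/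
theorem stmt_9 (n : ℕ) (hn : 1 ≤ n)
    (u : Fin n ⊕ Fin n → ℝ) (hu : ∀ i, u i ∈ Set.Icc (0 : ℝ) 1)
    (w : Fin n → ℝ)
    (hw : ∀ i : Fin n,
      max (u (Sum.inl i) + u (Sum.inr i) - 1) 0 ≤ w i ∧
      w i ≤ min (u (Sum.inl i)) (u (Sum.inr i)))
    (M : Matrix (Fin n ⊕ Fin n) (Fin n ⊕ Fin n) ℝ)
    (hM : ∀ i j, M i j =
      if i = j then u i - (u i) ^ 2
      else
        match i, j with
        | Sum.inl i', Sum.inr j' =>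
            if i' = j' then w i' - u (Sum.inl i') * u (Sum.inr i') else 0
        | Sum.inr i', Sum.inl j' =>
            if i' = j' then w j' - u (Sum.inl j') * u (Sum.inr j') else 0
        | _, _ => 0) :
    M.PosSemidef := by
  set a : Fin n → ℝ := fun i => u (Sum.inl i) - u (Sum.inl i) ^ 2 with ha
  set b : Fin n → ℝ := fun i => u (Sum.inr i) - u (Sum.inr i) ^ 2 with hb
  set c : Fin n → ℝ := fun i => w i - u (Sum.inl i) * u (Sum.inr i) with hc
  have habs : ∀ i : Fin n, |c i| ≤ a i ∧ |c i| ≤ b i := by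
    intro i
    obtain ⟨h1, h2⟩ := hw i
    obtain ⟨hx0, hx1⟩ := hu (Sum.inl i)
    obtain ⟨hy0, hy1⟩ := hu (Sum.inr i)
    have h3 : u (Sum.inl i) + u (Sum.inr i) - 1 ≤ w i := le_trans (le_max_left _ _) h1
    have h4 : (0:ℝ) ≤ w i := le_trans (le_max_right _ _) h1
    have h5 : w i ≤ u (Sum.inl i) := le_trans h2 (min_le_left _ _)
    have h6 : w i ≤ u (Sum.inr i) := le_trans h2 (min_le_right _ _)
    constructor <;> rw [abs_le] <;> constructor <;> simp only [ha, hb, hc] <;>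
      nlinarith [mul_nonneg hx0 hy0, mul_nonneg hx0 (sub_nonneg.mpr hy1),
        mul_nonneg hy0 (sub_nonneg.mpr hx1),
        mul_nonneg (sub_nonneg.mpr hx1) (sub_nonneg.mpr hy1),
        mul_nonneg h4 (sub_nonneg.mpr hx1), mul_nonneg h4 (sub_nonneg.mpr hy1)]
  have hMll : ∀ i j, M (Sum.inl i) (Sum.inl j) = if i = j then a i else 0 := by
    intro i j; rw [hM]; by_cases h : i = j <;> simp [h, ha]
  have hMrr : ∀ i j, M (Sum.inr i) (Sum.inr j) = if i = j then b i else 0 := by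
    intro i j; rw [hM]; by_cases h : i = j <;> simp [h, hb]
  have hMlr : ∀ i j, M (Sum.inl i) (Sum.inr j) = if i = j then c i else 0 := by
    intro i j; rw [hM]; by_cases h : i = j <;> simp [h, hc]
  have hMrl : ∀ i j, M (Sum.inr i) (Sum.inl j) = if i = j then c j else 0 := by
    intro i j; rw [hM]; by_cases h : i = j <;> simp [h, hc]
  rw [Matrix.posSemidef_iff_dotProduct_mulVec]
  constructor
  · ext i j
    simp only [Matrix.conjTranspose_apply, star_trivial]
    rcases i with i | i <;> rcases j with j | j <;> by_cases h : i = j <;>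
      simp [hMll, hMrr, hMlr, hMrl, h, eq_comm]
  · intro x
    have hx : star x = x := star_trivial x
    rw [hx]
    have hmv : ∀ v : Fin n ⊕ Fin n → ℝ,
        dotProduct v (M.mulVec v) =
        ∑ i : Fin n, (a i * v (Sum.inl i) ^ 2 + 2 * c i * v (Sum.inl i) * v (Sum.inr i)
          + b i * v (Sum.inr i) ^ 2) := by
      intro v
      simp only [dotProduct, Matrix.mulVec, Fintype.sum_sum_type,
        hMll, hMrr, hMlr, hMrl, ite_mul, zero_mul, Finset.sum_ite_eq,
        Finset.mem_univ, if_true, Finset.mul_sum, mul_ite, mul_zero]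
      rw [← Finset.sum_add_distrib]
      apply Finset.sum_congr rfl
      intro i _
      ring
    rw [hmv]
    apply Finset.sum_nonneg
    intro i _
    exact quad_nn _ _ _ _ _ (habs i).1 (habs i).2
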